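/- Let m be a positive integer, 𝕜 = (k₁,…,k_m) an index of positive integers, and N a positive integer. Then in the polynomial ring ℚ[t₁,…,t_m]: (-1)^{m-1} ∑_{N ≥ n₁ > ⋯ > n_m ≥ 1} t₁^{n₁}⋯t_m^{n_m}/(n₁^{k₁}⋯n_m^{k_m}) = ∑_{N ≥ n₁ ≥ ⋯ ≥ n_m ≥ 1} t_m^{n₁}⋯t₁^{n_m}/(n₁^{k_m}⋯n_m^{k₁}) + ∑_{j=1}^{m-1} (-1)^j (∑_{N ≥ n₁ > ⋯ > n_j ≥ 1} t₁^{n₁}⋯t_j^{n_j}/(n₁^{k₁}⋯n_j^{k_j})) · (∑_{N ≥ n₁ ≥ ⋯ ≥ n_{m-j} ≥ 1} t_m^{n₁}⋯t_{j+1}^{n_{m-j}}/(n₁^{k_m}⋯n_{m-j}^{k_{j+1}})). -/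

import Mathlib

open MvPolynomial

/-- Truncated multiple polylogarithm sum over tuples `N ≥ n₁ > ⋯ > n_r ≥ 1`
(strict if `strict = true`, weakly decreasing otherwise), with exponents `κ` and
variables `v` (both read off via `Fin r → ℕ` positions), valued in `ℚ[t₀,t₁,…]`. -/
noncomputable def truncPolylogSum (N r : ℕ) (strict : Bool) (κ : ℕ → ℕ)
    (v : ℕ → MvPolynomial ℕ ℚ) : MvPolynomial ℕ ℚ :=
  ∑ n ∈ Finset.filter
      (fun n : Fin r → ℕ =>
        ∀ a b : Fin r, a < b → (if strict then n b < n a else n b ≤ n a))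
      (Fintype.piFinset fun _ => Finset.Icc 1 N),
    (∏ i : Fin r, v i.val ^ n i) * MvPolynomial.C (∏ i : Fin r, 1 / (n i : ℚ) ^ κ i.val)

lemma key_prod {M : Type*} [CommMonoid M] (m j : ℕ) (hm : 0 < m) (hj : j ≤ m)
    (F : ℕ → ℕ → M) (q : Fin m → ℕ) (n : Fin j → ℕ) (p : Fin (m - j) → ℕ)
    (hq1 : ∀ i : Fin j, q ⟨i.val, lt_of_lt_of_le i.isLt hj⟩ = n i)
    (hq2 : ∀ i : Fin (m - j), q ⟨m - 1 - i.val, by omega⟩ = p i) :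
    (∏ i : Fin j, F i.val (n i)) * (∏ i : Fin (m - j), F (m - 1 - i.val) (p i)) =
      ∏ i : Fin m, F i.val (q i) := by
  set G : ℕ → M := fun t => F t (if h : t < m then q ⟨t, h⟩ else 0) with hG
  have hQ : ∀ (r : ℕ) (f : Fin r → M) (g : ℕ → M), (∀ i : Fin r, f i = g i.val) →
      ∏ i : Fin r, f i = ∏ i ∈ Finset.range r, g i := by
    intro r f g h
    calc ∏ i : Fin r, f i = ∏ i : Fin r, g i.val := Finset.prod_congr rfl (fun i _ => h i)
      _ = ∏ i ∈ Finset.range r, g i := Fin.prod_univ_eq_prod_range g r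
  have h1 : (∏ i : Fin j, F i.val (n i)) = ∏ i ∈ Finset.range j, G i := by
    refine hQ j _ G fun i => ?_
    simp only [hG]
    rw [dif_pos (lt_of_lt_of_le i.isLt hj), hq1 i]
  have h2 : (∏ i : Fin (m - j), F (m - 1 - i.val) (p i)) =
      ∏ i ∈ Finset.range (m - j), G (m - 1 - i) := by
    refine hQ (m - j) _ (fun t => G (m - 1 - t)) fun i => ?_
    simp only [hG]
    rw [dif_pos (by omega : m - 1 - i.val < m), hq2 i]
  have h3 : (∏ i : Fin m, F i.val (q i)) = ∏ i ∈ Finset.range m, G i := by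
    refine hQ m _ G fun i => ?_
    simp only [hG]
    rw [dif_pos i.isLt]
  rw [h1, h2, h3]
  have h4 : ∏ i ∈ Finset.range (m - j), G (m - 1 - i) = ∏ i ∈ Finset.Ico j m, G i := by
    calc ∏ i ∈ Finset.range (m - j), G (m - 1 - i)
        = ∏ i ∈ Finset.range (m - j), (fun t => G (j + t)) (m - j - 1 - i) := by
          refine Finset.prod_congr rfl fun i hi => ?_
          simp only [Finset.mem_range] at hi
          congr 1
          omega
      _ = ∏ i ∈ Finset.range (m - j), G (j + i) := by
          simpa using Finset.prod_range_reflect (fun t => G (j + t)) (m - j)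
      _ = ∏ i ∈ Finset.Ico j m, G i := (Finset.prod_Ico_eq_prod_range G j m).symm
  rw [h4, Finset.range_eq_Ico, Finset.range_eq_Ico]
  exact Finset.prod_Ico_consecutive G (Nat.zero_le j) hj

lemma lemB (m : ℕ) (hm : 0 < m) (q : Fin m → ℕ) :
    ∑ j ∈ Finset.filter (fun j =>
        (∀ a b : Fin m, a < b → b.val < j → q b < q a) ∧
        (∀ a b : Fin m, a < b → j ≤ a.val → q a ≤ q b)) (Finset.range (m + 1)),
      (-1 : MvPolynomial ℕ ℚ) ^ j = 0 := by
  set V : Finset ℕ := Finset.filter (fun j =>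
        (∀ a b : Fin m, a < b → b.val < j → q b < q a) ∧
        (∀ a b : Fin m, a < b → j ≤ a.val → q a ≤ q b)) (Finset.range (m + 1)) with hV
  rcases V.eq_empty_or_nonempty with h | h
  · rw [h, Finset.sum_empty]
  · set b := V.min' h with hb
    have hbV : b ∈ V := V.min'_mem h
    rw [hV, Finset.mem_filter, Finset.mem_range] at hbV
    obtain ⟨hbm, hb1, hb2⟩ := hbV
    have hblt : b < m := by
      by_contra hc
      have hbeq : b = m := by omega
      have hmem : m - 1 ∈ V := by
        rw [hV, Finset.mem_filter, Finset.mem_range]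
        refine ⟨by omega, fun a c hac hc' => hb1 a c hac (by omega), fun a c hac ha => ?_⟩
        exfalso
        have h1 := c.isLt
        have h2 : a.val < c.val := hac
        omega
      have := V.min'_le _ hmem
      omega
    have key2 : 1 ≤ b → ∀ i i' : Fin m, i.val = b → i'.val = b - 1 → q i < q i' := by
      intro h1 i i' hi hi'
      have hnot : b - 1 ∉ V := fun hmem => by
        have := V.min'_le _ hmem; omega
      rw [hV, Finset.mem_filter, Finset.mem_range] at hnot
      have hnQ : ¬ ∀ a c : Fin m, a < c → b - 1 ≤ a.val → q a ≤ q c := by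
        intro hq2'
        exact hnot ⟨by omega, fun a c hac hc' => hb1 a c hac (by omega), hq2'⟩
      push_neg at hnQ
      obtain ⟨a, c, hac, ha, hqac⟩ := hnQ
      have hacv : a.val < c.val := hac
      have haval : a.val = b - 1 := by
        by_contra hav
        have hge : b ≤ a.val := by omega
        exact absurd (hb2 a c hac hge) (by omega)
      have ha' : a = i' := Fin.ext (by omega)
      have hcge : b ≤ c.val := by omega
      rcases eq_or_lt_of_le hcge with hceq | hclt
      · have hc' : c = i := Fin.ext (by omega)
        rw [ha', hc'] at hqac
        omega
      · have h2 := hb2 i c (show i.val < c.val by omega) (by omega)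
        rw [ha'] at hqac
        omega
    have hsucc : b + 1 ∈ V := by
      rw [hV, Finset.mem_filter, Finset.mem_range]
      refine ⟨by omega, fun a c hac hc' => ?_, fun a c hac ha => hb2 a c hac (by omega)⟩
      rcases Nat.lt_or_ge c.val b with h' | h'
      · exact hb1 a c hac h'
      · have hacv : a.val < c.val := hac
        have hcb : c.val = b := by omega
        have h1 : 1 ≤ b := by omega
        have haval : a.val ≤ b - 1 := by omega
        rcases eq_or_lt_of_le haval with haeq | halt
        · exact key2 h1 c a hcb haeq
        · have hb1m' : b - 1 < m := by omega
          have h2 := hb1 a ⟨b - 1, hb1m'⟩ (show a.val < b - 1 by omega) (show b - 1 < b by omega)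
          have h3 := key2 h1 c ⟨b - 1, hb1m'⟩ hcb rfl
          omega
    have hup : ∀ j ∈ V, j ≤ b + 1 := by
      intro j hj
      by_contra hc
      rw [hV, Finset.mem_filter, Finset.mem_range] at hj
      obtain ⟨hjm, hj1, hj2⟩ := hj
      have hb1m : b + 1 < m := by omega
      have h1 := hj1 ⟨b, hblt⟩ ⟨b + 1, hb1m⟩ (show b < b + 1 by omega) (show b + 1 < j by omega)
      have h2 := hb2 ⟨b, hblt⟩ ⟨b + 1, hb1m⟩ (show b < b + 1 by omega) (show b ≤ b by omega)
      omega
    have hVeq : V = {b, b + 1} := by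
      apply Finset.Subset.antisymm
      · intro j hj
        have h1 := V.min'_le _ hj
        have h2 := hup j hj
        simp only [Finset.mem_insert, Finset.mem_singleton]
        omega
      · intro j hj
        simp only [Finset.mem_insert, Finset.mem_singleton] at hj
        rcases hj with rfl | rfl
        · exact V.min'_mem h
        · exact hsucc
    rw [hVeq, Finset.sum_pair (by omega : b ≠ b + 1), pow_succ]
    ring

lemma lemA (m N j : ℕ) (hm : 0 < m) (hj : j ≤ m) (k : ℕ → ℕ) :
    truncPolylogSum N j true k (fun i => X i) *
      truncPolylogSum N (m - j) false (fun i => k (m - 1 - i)) (fun i => X (m - 1 - i)) =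
    ∑ q ∈ Finset.filter (fun q : Fin m → ℕ =>
        (∀ a b : Fin m, a < b → b.val < j → q b < q a) ∧
        (∀ a b : Fin m, a < b → j ≤ a.val → q a ≤ q b))
      (Fintype.piFinset fun _ => Finset.Icc 1 N),
      ((∏ i : Fin m, (X i.val : MvPolynomial ℕ ℚ) ^ q i) *
        MvPolynomial.C (∏ i : Fin m, 1 / (q i : ℚ) ^ k i.val)) := by
  unfold truncPolylogSum
  rw [Finset.sum_mul_sum, ← Finset.sum_product']
  refine Finset.sum_bij'
    (fun np _ => fun i : Fin m =>
      if h : i.val < j then np.1 ⟨i.val, h⟩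
      else np.2 ⟨m - 1 - i.val, by have := i.isLt; omega⟩)
    (fun q _ => (fun i : Fin j => q ⟨i.val, lt_of_lt_of_le i.isLt hj⟩,
      fun i : Fin (m - j) => q ⟨m - 1 - i.val, by omega⟩))
    ?_ ?_ ?_ ?_ ?_
  · -- hi : image lands in target
    rintro ⟨n, p⟩ hnp
    rw [Finset.mem_product] at hnp
    obtain ⟨hn, hp⟩ := hnp
    rw [Finset.mem_filter, Fintype.mem_piFinset] at hn hp
    obtain ⟨hn1, hn2⟩ := hn
    obtain ⟨hp1, hp2⟩ := hp
    rw [Finset.mem_filter, Fintype.mem_piFinset]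
    refine ⟨fun i => ?_, fun a c hac hc => ?_, fun a c hac ha => ?_⟩
    · dsimp only
      split
      · exact hn1 _
      · exact hp1 _
    · have hav : a.val < c.val := hac
      have haj : a.val < j := by omega
      dsimp only
      rw [dif_pos hc, dif_pos haj]
      have := hn2 ⟨a.val, haj⟩ ⟨c.val, hc⟩ (show a.val < c.val from hav)
      simpa using this
    · have hav : a.val < c.val := hac
      have hc' := c.isLt
      have ha' := a.isLt
      have hcj : ¬ c.val < j := by omega
      have haj : ¬ a.val < j := by omega
      dsimp only
      rw [dif_neg haj, dif_neg hcj]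
      have := hp2 ⟨m - 1 - c.val, by omega⟩ ⟨m - 1 - a.val, by omega⟩
        (show m - 1 - c.val < m - 1 - a.val by omega)
      simpa using this
  · -- hj : reverse map lands in source
    intro q hq
    rw [Finset.mem_filter, Fintype.mem_piFinset] at hq
    obtain ⟨hq0, hq1, hq2⟩ := hq
    rw [Finset.mem_product]
    constructor
    · rw [Finset.mem_filter, Fintype.mem_piFinset]
      refine ⟨fun i => hq0 _, fun a c hac => ?_⟩
      have hav : a.val < c.val := hac
      have := hq1 ⟨a.val, lt_of_lt_of_le a.isLt hj⟩ ⟨c.val, lt_of_lt_of_le c.isLt hj⟩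
        (show a.val < c.val from hav) (show c.val < j from c.isLt)
      simpa using this
    · rw [Finset.mem_filter, Fintype.mem_piFinset]
      refine ⟨fun i => hq0 _, fun a c hac => ?_⟩
      have hav : a.val < c.val := hac
      have ha' := a.isLt
      have hc' := c.isLt
      have := hq2 ⟨m - 1 - c.val, by omega⟩ ⟨m - 1 - a.val, by omega⟩
        (show m - 1 - c.val < m - 1 - a.val by omega) (show j ≤ m - 1 - c.val by omega)
      simpa using this
  · -- left inverse
    rintro ⟨n, p⟩ _
    dsimp only
    refine Prod.ext ?_ ?_
    · funext i
      dsimp only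
      rw [dif_pos i.isLt]
    · funext i
      have hi := i.isLt
      dsimp only
      rw [dif_neg (show ¬ m - 1 - i.val < j by omega)]
      exact congrArg p (Fin.ext (by simp; omega))
  · -- right inverse
    intro q _
    funext i
    have hi := i.isLt
    dsimp only
    split
    · exact congrArg q (Fin.ext rfl)
    · exact congrArg q (Fin.ext (by simp; omega))
  · -- values agree
    rintro ⟨n, p⟩ _
    dsimp only
    rw [mul_mul_mul_comm, ← map_mul]
    have hq1 : ∀ i : Fin j,
        (fun i : Fin m => if h : i.val < j then n ⟨i.val, h⟩
          else p ⟨m - 1 - i.val, by have := i.isLt; omega⟩) ⟨i.val, lt_of_lt_of_le i.isLt hj⟩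
          = n i := by
      intro i
      dsimp only
      rw [dif_pos i.isLt]
    have hq2 : ∀ i : Fin (m - j),
        (fun i : Fin m => if h : i.val < j then n ⟨i.val, h⟩
          else p ⟨m - 1 - i.val, by have := i.isLt; omega⟩) ⟨m - 1 - i.val, by omega⟩
          = p i := by
      intro i
      have hi := i.isLt
      dsimp only
      rw [dif_neg (show ¬ m - 1 - i.val < j by omega)]
      exact congrArg p (Fin.ext (by simp; omega))
    congr 1
    · exact key_prod m j hm hj (fun t e => (X t : MvPolynomial ℕ ℚ) ^ e) _ n p hq1 hq2
    · exact congrArg MvPolynomial.C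
        (key_prod m j hm hj (fun t e => 1 / (e : ℚ) ^ k t) _ n p hq1 hq2)

lemma trunc_zero (N : ℕ) (s : Bool) (κ : ℕ → ℕ) (v : ℕ → MvPolynomial ℕ ℚ) :
    truncPolylogSum N 0 s κ v = 1 := by
  unfold truncPolylogSum
  simp

lemma lemC (m N : ℕ) (hm : 0 < m) (k : ℕ → ℕ) :
    ∑ j ∈ Finset.range (m + 1), (-1 : MvPolynomial ℕ ℚ) ^ j *
        truncPolylogSum N j true k (fun i => X i) *
        truncPolylogSum N (m - j) false (fun i => k (m - 1 - i)) (fun i => X (m - 1 - i)) = 0 := by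
  have step : ∀ j ∈ Finset.range (m + 1), (-1 : MvPolynomial ℕ ℚ) ^ j *
      truncPolylogSum N j true k (fun i => X i) *
      truncPolylogSum N (m - j) false (fun i => k (m - 1 - i)) (fun i => X (m - 1 - i)) =
      ∑ q ∈ Fintype.piFinset (fun _ : Fin m => Finset.Icc 1 N),
        (if ((∀ a b : Fin m, a < b → b.val < j → q b < q a) ∧
            (∀ a b : Fin m, a < b → j ≤ a.val → q a ≤ q b)) then
          (-1 : MvPolynomial ℕ ℚ) ^ j *
            ((∏ i : Fin m, (X i.val : MvPolynomial ℕ ℚ) ^ q i) *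
              MvPolynomial.C (∏ i : Fin m, 1 / (q i : ℚ) ^ k i.val)) else 0) := by
    intro j hj
    rw [Finset.mem_range] at hj
    rw [mul_assoc, lemA m N j hm (by omega) k, Finset.mul_sum, Finset.sum_filter]
  rw [Finset.sum_congr rfl step, Finset.sum_comm]
  refine Finset.sum_eq_zero fun q hq => ?_
  have h0 := lemB m hm q
  calc ∑ j ∈ Finset.range (m + 1),
        (if ((∀ a b : Fin m, a < b → b.val < j → q b < q a) ∧
            (∀ a b : Fin m, a < b → j ≤ a.val → q a ≤ q b)) then
          (-1 : MvPolynomial ℕ ℚ) ^ j *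
            ((∏ i : Fin m, (X i.val : MvPolynomial ℕ ℚ) ^ q i) *
              MvPolynomial.C (∏ i : Fin m, 1 / (q i : ℚ) ^ k i.val)) else 0)
      = ∑ j ∈ Finset.range (m + 1),
        (if ((∀ a b : Fin m, a < b → b.val < j → q b < q a) ∧
            (∀ a b : Fin m, a < b → j ≤ a.val → q a ≤ q b)) then
          ((-1 : MvPolynomial ℕ ℚ) ^ j) else 0) *
            ((∏ i : Fin m, (X i.val : MvPolynomial ℕ ℚ) ^ q i) *
              MvPolynomial.C (∏ i : Fin m, 1 / (q i : ℚ) ^ k i.val)) := by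
        refine Finset.sum_congr rfl fun j _ => ?_
        rw [ite_mul, zero_mul]
    _ = (∑ j ∈ Finset.filter (fun j =>
            (∀ a b : Fin m, a < b → b.val < j → q b < q a) ∧
            (∀ a b : Fin m, a < b → j ≤ a.val → q a ≤ q b)) (Finset.range (m + 1)),
          (-1 : MvPolynomial ℕ ℚ) ^ j) *
            ((∏ i : Fin m, (X i.val : MvPolynomial ℕ ℚ) ^ q i) *
              MvPolynomial.C (∏ i : Fin m, 1 / (q i : ℚ) ^ k i.val)) := by
        rw [← Finset.sum_mul, Finset.sum_filter]
    _ = 0 := by rw [h0, zero_mul]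

/-- The truncated antipode identity for multiple polylogarithms:
`(-1)^{m-1} ∑_{N ≥ n₁ > ⋯ > n_m ≥ 1} t₁^{n₁}⋯t_m^{n_m}/(n₁^{k₁}⋯n_m^{k_m})
 = ∑_{N ≥ n₁ ≥ ⋯ ≥ n_m ≥ 1} t_m^{n₁}⋯t₁^{n_m}/(n₁^{k_m}⋯n_m^{k₁})
   + ∑_{j=1}^{m-1} (-1)^j (strict sum of depth j) ⬝ (star sum of depth m-j, reversed)`
in `ℚ[t₁,…,t_m]` (variable `tᵢ` is `X (i-1)`, index `kᵢ` is `k (i-1)`). -/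
theorem trunc_antipode (m N : ℕ) (hm : 0 < m) (hN : 0 < N) (k : ℕ → ℕ)
    (hk : ∀ i < m, 0 < k i) :
    (-1 : MvPolynomial ℕ ℚ) ^ (m - 1) * truncPolylogSum N m true k (fun i => X i)
      = truncPolylogSum N m false (fun i => k (m - 1 - i)) (fun i => X (m - 1 - i))
        + ∑ j ∈ Finset.Ico 1 m, (-1 : MvPolynomial ℕ ℚ) ^ j *
            truncPolylogSum N j true k (fun i => X i) *
            truncPolylogSum N (m - j) false (fun i => k (m - 1 - i))
              (fun i => X (m - 1 - i)) := by
  have hsum := lemC m N hm k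
  rw [Finset.sum_range_succ] at hsum
  rw [Finset.range_eq_Ico, Finset.sum_eq_sum_Ico_succ_bot hm] at hsum
  simp only [zero_add, pow_zero, one_mul, Nat.sub_zero, Nat.sub_self, trunc_zero, mul_one]
    at hsum
  have h1 : m - 1 + 1 = m := Nat.succ_pred_eq_of_pos hm
  have hpow : (-1 : MvPolynomial ℕ ℚ) ^ m = -(-1 : MvPolynomial ℕ ℚ) ^ (m - 1) := by
    nth_rewrite 1 [← h1]
    rw [pow_succ]
    ring
  rw [hpow] at hsum
  set c := (-1 : MvPolynomial ℕ ℚ) ^ (m - 1) with hc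
  linear_combination -hsum
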